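/- arXiv:1902.06192 — 2 statements merged into one kernel-verified Lean document; each statement's English description precedes it below -/
import Mathlib

section
/- For the two non-isomorphic counterexample graphs G₁ and G₂ (defined by middle-layer edges forming an 8-cycle versus two complete bipartite components), the iterative labeling algorithm produces identical label multisets at every iteration t; hence the graph invariant fails to distinguish them. -/
def outdeg {n : ℕ} (E : Fin n → Fin n → Bool) (i : Fin n) : ℕ :=
  (Finset.univ.filter (fun j => E i j)).card

def indeg {n : ℕ} (E : Fin n → Fin n → Bool) (i : Fin n) : ℕ :=
  (Finset.univ.filter (fun j => E j i)).card

/-- The type of labels after `t` iterations: at level 0 a triple of naturals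
(out-degree, in-degree, color); at level `t+1` a triple of (multiset of
out-neighbor labels, multiset of in-neighbor labels, previous label). -/
def LabelT : ℕ → Type
  | 0 => ℕ × ℕ × ℕ
  | t + 1 => Multiset (LabelT t) × Multiset (LabelT t) × LabelT t

/-- The iterative labeling: `H E c t i` is the label of vertex `i` after `t` iterations. -/
def H {n : ℕ} (E : Fin n → Fin n → Bool) (c : Fin n → ℕ) : (t : ℕ) → Fin n → LabelT t
  | 0, i => (outdeg E i, indeg E i, c i)
  | t + 1, i =>
      ((Finset.univ.filter (fun o => E i o)).val.map (H E c t),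
       (Finset.univ.filter (fun o => E o i)).val.map (H E c t),
       H E c t i)

/-- Edges of the first counterexample graph (0-based vertex names: paper's
vertex `v` is `v - 1` here).  Middle layer forms a single 8-cycle. -/
def L1 : List (ℕ × ℕ) :=
  [(0,1),(0,2),(0,3),(0,4),
   (1,5),(1,6),(2,6),(2,7),(3,7),(3,8),(4,8),(4,5),
   (5,9),(6,9),(7,9),(8,9)]

/-- Edges of the second counterexample graph: middle layer forms two
complete bipartite components. -/
def L2 : List (ℕ × ℕ) :=
  [(0,1),(0,2),(0,3),(0,4),
   (1,5),(1,6),(2,5),(2,6),(3,7),(3,8),(4,7),(4,8),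
   (5,9),(6,9),(7,9),(8,9)]

def E1 : Fin 10 → Fin 10 → Bool := fun i j => decide ((i.val, j.val) ∈ L1)
def E2 : Fin 10 → Fin 10 → Bool := fun i j => decide ((i.val, j.val) ∈ L2)

/-- Coloring: vertex 1 gets color 0, vertex 10 gets color 1,
vertices 2–5 get color 2, vertices 6–9 get color 3. -/
def c10 : Fin 10 → ℕ := fun i =>
  if i.val = 0 then 0 else if i.val = 9 then 1 else if i.val < 5 then 2 else 3

instance instDecEqLabelT (t : ℕ) : DecidableEq (LabelT t) := by
  induction t with
  | zero => exact inferInstanceAs (DecidableEq (ℕ×ℕ×ℕ))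
  | succ t ih =>
      exact show (DecidableEq (Multiset (LabelT t) × Multiset (LabelT t) × LabelT t)) from
        (@instDecidableEqProd _ _ (@Multiset.decidableEq _ ih)
          (@instDecidableEqProd _ _ (@Multiset.decidableEq _ ih) ih))

lemma key : ∀ t : ℕ,
    (∀ i, H E1 c10 t i = H E2 c10 t i) ∧
    (H E1 c10 t 1 = H E1 c10 t 2 ∧ H E1 c10 t 1 = H E1 c10 t 3 ∧ H E1 c10 t 1 = H E1 c10 t 4) ∧
    (H E1 c10 t 5 = H E1 c10 t 6 ∧ H E1 c10 t 5 = H E1 c10 t 7 ∧ H E1 c10 t 5 = H E1 c10 t 8) := by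
  intro t
  induction t with
  | zero => exact ⟨by decide, by decide, by decide⟩
  | succ t ih =>
    obtain ⟨h0, ⟨h12, h13, h14⟩, ⟨h56, h57, h58⟩⟩ := ih
    have hfg : H E1 c10 t = H E2 c10 t := funext h0
    -- g-versions of the class equalities
    have g12 : H E2 c10 t 1 = H E2 c10 t 2 := by rw [← hfg]; exact h12
    have g13 : H E2 c10 t 1 = H E2 c10 t 3 := by rw [← hfg]; exact h13
    have g14 : H E2 c10 t 1 = H E2 c10 t 4 := by rw [← hfg]; exact h14
    have g56 : H E2 c10 t 5 = H E2 c10 t 6 := by rw [← hfg]; exact h56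
    have g57 : H E2 c10 t 5 = H E2 c10 t 7 := by rw [← hfg]; exact h57
    have g58 : H E2 c10 t 5 = H E2 c10 t 8 := by rw [← hfg]; exact h58
    -- concrete neighbor multisets
    have e1o0 : (Finset.univ.filter (fun o => E1 0 o)).val = ({1,2,3,4} : Multiset (Fin 10)) := by decide
    have e1o1 : (Finset.univ.filter (fun o => E1 1 o)).val = ({5,6} : Multiset (Fin 10)) := by decide
    have e1o2 : (Finset.univ.filter (fun o => E1 2 o)).val = ({6,7} : Multiset (Fin 10)) := by decide
    have e1o3 : (Finset.univ.filter (fun o => E1 3 o)).val = ({7,8} : Multiset (Fin 10)) := by decide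
    have e1o4 : (Finset.univ.filter (fun o => E1 4 o)).val = ({5,8} : Multiset (Fin 10)) := by decide
    have e1o5 : (Finset.univ.filter (fun o => E1 5 o)).val = ({9} : Multiset (Fin 10)) := by decide
    have e1o6 : (Finset.univ.filter (fun o => E1 6 o)).val = ({9} : Multiset (Fin 10)) := by decide
    have e1o7 : (Finset.univ.filter (fun o => E1 7 o)).val = ({9} : Multiset (Fin 10)) := by decide
    have e1o8 : (Finset.univ.filter (fun o => E1 8 o)).val = ({9} : Multiset (Fin 10)) := by decide
    have e1o9 : (Finset.univ.filter (fun o => E1 9 o)).val = (0 : Multiset (Fin 10)) := by decide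
    have e1i0 : (Finset.univ.filter (fun o => E1 o 0)).val = (0 : Multiset (Fin 10)) := by decide
    have e1i1 : (Finset.univ.filter (fun o => E1 o 1)).val = ({0} : Multiset (Fin 10)) := by decide
    have e1i2 : (Finset.univ.filter (fun o => E1 o 2)).val = ({0} : Multiset (Fin 10)) := by decide
    have e1i3 : (Finset.univ.filter (fun o => E1 o 3)).val = ({0} : Multiset (Fin 10)) := by decide
    have e1i4 : (Finset.univ.filter (fun o => E1 o 4)).val = ({0} : Multiset (Fin 10)) := by decide
    have e1i5 : (Finset.univ.filter (fun o => E1 o 5)).val = ({1,4} : Multiset (Fin 10)) := by decide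
    have e1i6 : (Finset.univ.filter (fun o => E1 o 6)).val = ({1,2} : Multiset (Fin 10)) := by decide
    have e1i7 : (Finset.univ.filter (fun o => E1 o 7)).val = ({2,3} : Multiset (Fin 10)) := by decide
    have e1i8 : (Finset.univ.filter (fun o => E1 o 8)).val = ({3,4} : Multiset (Fin 10)) := by decide
    have e1i9 : (Finset.univ.filter (fun o => E1 o 9)).val = ({5,6,7,8} : Multiset (Fin 10)) := by decide
    have e2o0 : (Finset.univ.filter (fun o => E2 0 o)).val = ({1,2,3,4} : Multiset (Fin 10)) := by decide
    have e2o1 : (Finset.univ.filter (fun o => E2 1 o)).val = ({5,6} : Multiset (Fin 10)) := by decide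
    have e2o2 : (Finset.univ.filter (fun o => E2 2 o)).val = ({5,6} : Multiset (Fin 10)) := by decide
    have e2o3 : (Finset.univ.filter (fun o => E2 3 o)).val = ({7,8} : Multiset (Fin 10)) := by decide
    have e2o4 : (Finset.univ.filter (fun o => E2 4 o)).val = ({7,8} : Multiset (Fin 10)) := by decide
    have e2o5 : (Finset.univ.filter (fun o => E2 5 o)).val = ({9} : Multiset (Fin 10)) := by decide
    have e2o6 : (Finset.univ.filter (fun o => E2 6 o)).val = ({9} : Multiset (Fin 10)) := by decide
    have e2o7 : (Finset.univ.filter (fun o => E2 7 o)).val = ({9} : Multiset (Fin 10)) := by decide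
    have e2o8 : (Finset.univ.filter (fun o => E2 8 o)).val = ({9} : Multiset (Fin 10)) := by decide
    have e2o9 : (Finset.univ.filter (fun o => E2 9 o)).val = (0 : Multiset (Fin 10)) := by decide
    have e2i0 : (Finset.univ.filter (fun o => E2 o 0)).val = (0 : Multiset (Fin 10)) := by decide
    have e2i1 : (Finset.univ.filter (fun o => E2 o 1)).val = ({0} : Multiset (Fin 10)) := by decide
    have e2i2 : (Finset.univ.filter (fun o => E2 o 2)).val = ({0} : Multiset (Fin 10)) := by decide
    have e2i3 : (Finset.univ.filter (fun o => E2 o 3)).val = ({0} : Multiset (Fin 10)) := by decide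
    have e2i4 : (Finset.univ.filter (fun o => E2 o 4)).val = ({0} : Multiset (Fin 10)) := by decide
    have e2i5 : (Finset.univ.filter (fun o => E2 o 5)).val = ({1,2} : Multiset (Fin 10)) := by decide
    have e2i6 : (Finset.univ.filter (fun o => E2 o 6)).val = ({1,2} : Multiset (Fin 10)) := by decide
    have e2i7 : (Finset.univ.filter (fun o => E2 o 7)).val = ({3,4} : Multiset (Fin 10)) := by decide
    have e2i8 : (Finset.univ.filter (fun o => E2 o 8)).val = ({3,4} : Multiset (Fin 10)) := by decide
    have e2i9 : (Finset.univ.filter (fun o => E2 o 9)).val = ({5,6,7,8} : Multiset (Fin 10)) := by decide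
    have p0 : H E1 c10 (t+1) 0 = H E2 c10 (t+1) 0 := by
      simp only [H, hfg, e1o0, e2o0, e1i0, e2i0]
      rfl
    have p1 : H E1 c10 (t+1) 1 = H E2 c10 (t+1) 1 := by
      simp only [H, hfg, e1o1, e2o1, e1i1, e2i1]
      rfl
    have p2 : H E1 c10 (t+1) 2 = H E2 c10 (t+1) 2 := by
      simp only [H, hfg, e1o2, e2o2, e1i2, e2i2, Multiset.insert_eq_cons, Multiset.map_cons, Multiset.map_singleton]
      rw [← g56, ← g57]
    have p3 : H E1 c10 (t+1) 3 = H E2 c10 (t+1) 3 := by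
      simp only [H, hfg, e1o3, e2o3, e1i3, e2i3]
      rfl
    have p4 : H E1 c10 (t+1) 4 = H E2 c10 (t+1) 4 := by
      simp only [H, hfg, e1o4, e2o4, e1i4, e2i4, Multiset.insert_eq_cons, Multiset.map_cons, Multiset.map_singleton]
      rw [← g57, ← g58]
    have p5 : H E1 c10 (t+1) 5 = H E2 c10 (t+1) 5 := by
      simp only [H, hfg, e1o5, e2o5, e1i5, e2i5, Multiset.insert_eq_cons, Multiset.map_cons, Multiset.map_singleton]
      rw [← g12, ← g14]
    have p6 : H E1 c10 (t+1) 6 = H E2 c10 (t+1) 6 := by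
      simp only [H, hfg, e1o6, e2o6, e1i6, e2i6]
      rfl
    have p7 : H E1 c10 (t+1) 7 = H E2 c10 (t+1) 7 := by
      simp only [H, hfg, e1o7, e2o7, e1i7, e2i7, Multiset.insert_eq_cons, Multiset.map_cons, Multiset.map_singleton]
      rw [← g12, ← g13, ← g14]
    have p8 : H E1 c10 (t+1) 8 = H E2 c10 (t+1) 8 := by
      simp only [H, hfg, e1o8, e2o8, e1i8, e2i8]
      rfl
    have p9 : H E1 c10 (t+1) 9 = H E2 c10 (t+1) 9 := by
      simp only [H, hfg, e1o9, e2o9, e1i9, e2i9]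
      rfl
    refine ⟨fun i => ?_, ⟨?_, ?_, ?_⟩, ⟨?_, ?_, ?_⟩⟩
    · fin_cases i
      exacts [p0, p1, p2, p3, p4, p5, p6, p7, p8, p9]
    · simp only [H, e1o1, e1o2, e1i1, e1i2, Multiset.insert_eq_cons, Multiset.map_cons, Multiset.map_singleton]
      rw [← h56, ← h57, h12]
    · simp only [H, e1o1, e1o3, e1i1, e1i3, Multiset.insert_eq_cons, Multiset.map_cons, Multiset.map_singleton]
      rw [← h56, ← h57, ← h58, h13]
    · simp only [H, e1o1, e1o4, e1i1, e1i4, Multiset.insert_eq_cons, Multiset.map_cons, Multiset.map_singleton]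
      rw [← h56, ← h58, h14]
    · simp only [H, e1o5, e1o6, e1i5, e1i6, Multiset.insert_eq_cons, Multiset.map_cons, Multiset.map_singleton]
      rw [← h12, ← h14, h56]
    · simp only [H, e1o5, e1o7, e1i5, e1i7, Multiset.insert_eq_cons, Multiset.map_cons, Multiset.map_singleton]
      rw [← h12, ← h13, ← h14, h57]
    · simp only [H, e1o5, e1o8, e1i5, e1i8, Multiset.insert_eq_cons, Multiset.map_cons, Multiset.map_singleton]
      rw [← h13, ← h14, h58]

/-- The iterative labeling produces identical label multisets on the two
non-isomorphic counterexample graphs at every iteration. -/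
theorem counterexample_same_invariant :
    ∀ t : ℕ, Finset.univ.val.map (H E1 c10 t) = Finset.univ.val.map (H E2 c10 t) := by
  intro t
  rw [show H E1 c10 t = H E2 c10 t from funext (key t).1]
end

section
/- In the counterexample graph G₁, at every iteration t of the labeling algorithm, vertices 2, 3, 4, 5 all receive the same label, and vertices 6, 7, 8, 9 all receive the same label. -/
/-- In G₁, at every iteration, vertices 2,3,4,5 (here 1,2,3,4) share a label
and vertices 6,7,8,9 (here 5,6,7,8) share a label. -/
theorem counterexample_equal_labels :
    ∀ t : ℕ,
      (H E1 c10 t 1 = H E1 c10 t 2 ∧ H E1 c10 t 1 = H E1 c10 t 3 ∧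
        H E1 c10 t 1 = H E1 c10 t 4) ∧
      (H E1 c10 t 5 = H E1 c10 t 6 ∧ H E1 c10 t 5 = H E1 c10 t 7 ∧
        H E1 c10 t 5 = H E1 c10 t 8) := by
  intro t
  induction t with
  | zero =>
      refine ⟨⟨?_, ?_, ?_⟩, ?_, ?_, ?_⟩ <;> · show ((_ : ℕ), (_ : ℕ), (_ : ℕ)) = ((_ : ℕ), (_ : ℕ), (_ : ℕ)); decide
  | succ t ih =>
      obtain ⟨⟨h12, h13, h14⟩, h56, h57, h58⟩ := ih
      have o1 : (Finset.univ.filter (fun o => E1 1 o)).val = ({5, 6} : Multiset (Fin 10)) := by decide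
      have o2 : (Finset.univ.filter (fun o => E1 2 o)).val = ({6, 7} : Multiset (Fin 10)) := by decide
      have o3 : (Finset.univ.filter (fun o => E1 3 o)).val = ({7, 8} : Multiset (Fin 10)) := by decide
      have o4 : (Finset.univ.filter (fun o => E1 4 o)).val = ({5, 8} : Multiset (Fin 10)) := by decide
      have o5 : (Finset.univ.filter (fun o => E1 5 o)).val = ({9} : Multiset (Fin 10)) := by decide
      have o6 : (Finset.univ.filter (fun o => E1 6 o)).val = ({9} : Multiset (Fin 10)) := by decide
      have o7 : (Finset.univ.filter (fun o => E1 7 o)).val = ({9} : Multiset (Fin 10)) := by decide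
      have o8 : (Finset.univ.filter (fun o => E1 8 o)).val = ({9} : Multiset (Fin 10)) := by decide
      have i1 : (Finset.univ.filter (fun o => E1 o 1)).val = ({0} : Multiset (Fin 10)) := by decide
      have i2 : (Finset.univ.filter (fun o => E1 o 2)).val = ({0} : Multiset (Fin 10)) := by decide
      have i3 : (Finset.univ.filter (fun o => E1 o 3)).val = ({0} : Multiset (Fin 10)) := by decide
      have i4 : (Finset.univ.filter (fun o => E1 o 4)).val = ({0} : Multiset (Fin 10)) := by decide
      have i5 : (Finset.univ.filter (fun o => E1 o 5)).val = ({1, 4} : Multiset (Fin 10)) := by decide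
      have i6 : (Finset.univ.filter (fun o => E1 o 6)).val = ({1, 2} : Multiset (Fin 10)) := by decide
      have i7 : (Finset.univ.filter (fun o => E1 o 7)).val = ({2, 3} : Multiset (Fin 10)) := by decide
      have i8 : (Finset.univ.filter (fun o => E1 o 8)).val = ({3, 4} : Multiset (Fin 10)) := by decide
      refine ⟨⟨?_, ?_, ?_⟩, ?_, ?_, ?_⟩ <;>
        · show (_, _, _) = (_, _, _)
          simp only [H, o1, o2, o3, o4, o5, o6, o7, o8, i1, i2, i3, i4, i5, i6, i7, i8,
            Multiset.map_cons, Multiset.map_singleton, Multiset.insert_eq_cons]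
          simp only [← h12, ← h13, ← h14, ← h56, ← h57, ← h58]
end
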